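/- Let X be a nonempty finite set, let π be a target density on X, let d be a detection function on X such that d(x,0)=0 and d(x,·) is continuous, concave, and nondecreasing on [0,∞) for each x ∈ X, and let E be a cumulative effort function. Then there exists a uniformly optimal search plan for π within Φ(E); that is, there exists a search plan φ* with ∑_{x∈X} φ*(x,t) = E(t) for all t ≥ 0 such that for every search plan φ with ∑_{x∈X} φ(x,t) = E(t) for all t ≥ 0 and every t ≥ 0 one has ∑_{x∈X} d(x, φ*(x,t)) π(x) ≥ ∑_{x∈X} d(x, φ(x,t)) π(x). -/

import Mathlib

open Finset

/-- The set of nonnegative allocations of total effort `e`. -/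
def uoptSimplex {X : Type*} [Fintype X] (e : ℝ) : Set (X → ℝ) :=
  {f | (∀ x, 0 ≤ f x) ∧ ∑ x, f x = e}

lemma uoptSimplex_nonempty {X : Type*} [Fintype X] [Nonempty X] {e : ℝ} (he : 0 ≤ e) :
    (uoptSimplex (X := X) e).Nonempty := by
  have h0 : (Fintype.card X : ℝ) ≠ 0 := Nat.cast_ne_zero.mpr Fintype.card_ne_zero
  refine ⟨fun _ => e / Fintype.card X, fun x => div_nonneg he (Nat.cast_nonneg _), ?_⟩
  rw [Finset.sum_const, card_univ, nsmul_eq_mul]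
  field_simp

lemma uoptSimplex_compact {X : Type*} [Fintype X] (e : ℝ) :
    IsCompact (uoptSimplex (X := X) e) := by
  have hsub : uoptSimplex (X := X) e ⊆ Set.pi Set.univ (fun _ => Set.Icc (0:ℝ) e) := by
    rintro f ⟨hpos, hsum⟩ x _
    refine ⟨hpos x, ?_⟩
    calc f x = ∑ y ∈ {x}, f y := by simp
      _ ≤ ∑ y, f y :=
        Finset.sum_le_sum_of_subset_of_nonneg (Finset.subset_univ _) (fun y _ _ => hpos y)
      _ = e := hsum
  have h1 : IsClosed {f : X → ℝ | ∀ x, 0 ≤ f x} := by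
    have : {f : X → ℝ | ∀ x, 0 ≤ f x} = ⋂ x, {f | 0 ≤ f x} := by ext; simp
    rw [this]
    exact isClosed_iInter fun x => isClosed_le continuous_const (continuous_apply x)
  have h2 : IsClosed {f : X → ℝ | ∑ x, f x = e} :=
    isClosed_eq (continuous_finset_sum _ fun x _ => continuous_apply x) continuous_const
  exact (isCompact_univ_pi fun _ => isCompact_Icc).of_isClosed_subset (h1.inter h2) hsub

/-- Chord inequality for a concave function: moving a pair `(a,b)` inward to
`(a+r, b-r)` increases the sum of values. -/
lemma uopt_concave_chord {q : ℝ → ℝ} (hq : ConcaveOn ℝ (Set.Ici 0) q)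
    {a b r : ℝ} (ha : 0 ≤ a) (hab : a ≤ b) (hr0 : 0 ≤ r) (hrb : r ≤ b - a) :
    q a + q b ≤ q (a + r) + q (b - r) := by
  rcases eq_or_lt_of_le hab with h | h
  · have hr : r = 0 := le_antisymm (by linarith) hr0
    subst h; simp [hr]
  · have hb0 : (0:ℝ) ≤ b := le_trans ha hab
    set s : ℝ := r / (b - a) with hs
    have hba : (0:ℝ) < b - a := by linarith
    have hs0 : 0 ≤ s := div_nonneg hr0 hba.le
    have hs1 : s ≤ 1 := (div_le_one hba).2 (by linarith)
    have hsr : s * (b - a) = r := div_mul_cancel₀ r hba.ne'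
    have h1 := hq.2 (Set.mem_Ici.2 ha) (Set.mem_Ici.2 hb0)
      (by linarith : (0:ℝ) ≤ 1 - s) hs0 (by ring)
    have h2 := hq.2 (Set.mem_Ici.2 ha) (Set.mem_Ici.2 hb0)
      hs0 (by linarith : (0:ℝ) ≤ 1 - s) (by ring)
    simp only [smul_eq_mul] at h1 h2
    have e1 : (1 - s) * a + s * b = a + r := by nlinarith [hsr]
    have e2 : s * a + (1 - s) * b = b - r := by nlinarith [hsr]
    rw [e1] at h1
    rw [e2] at h2
    linarith

/-- Existence of a detection-probability maximizer on the simplex that, among all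
maximizers, minimizes the sum of squares. -/
lemma uopt_exists {X : Type*} [Fintype X] [Nonempty X]
    (D : X → ℝ → ℝ) (hc : ∀ x, ContinuousOn (D x) (Set.Ici 0))
    {e : ℝ} (he : 0 ≤ e) :
    ∃ f ∈ uoptSimplex (X := X) e,
      (∀ h ∈ uoptSimplex (X := X) e, ∑ x, D x (h x) ≤ ∑ x, D x (f x)) ∧
      ∀ h ∈ uoptSimplex (X := X) e,
        (∀ k ∈ uoptSimplex (X := X) e, ∑ x, D x (k x) ≤ ∑ x, D x (h x)) →
        ∑ x, (f x) ^ 2 ≤ ∑ x, (h x) ^ 2 := by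
  classical
  set D' : X → ℝ → ℝ := fun x y => D x (max y 0) with hD'
  have hD'c : ∀ x, Continuous (D' x) := fun x =>
    (hc x).comp_continuous (continuous_id.max continuous_const) (fun y => Set.mem_Ici.2 (le_max_right _ _))
  have hP'c : Continuous (fun f : X → ℝ => ∑ x, D' x (f x)) :=
    continuous_finset_sum _ fun x _ => (hD'c x).comp (continuous_apply x)
  have hagree : ∀ f ∈ uoptSimplex (X := X) e, ∑ x, D' x (f x) = ∑ x, D x (f x) := by
    intro f hf
    exact Finset.sum_congr rfl fun x _ => by rw [hD']; simp [max_eq_left (hf.1 x)]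
  obtain ⟨f₀, hf₀mem, hf₀max⟩ := (uoptSimplex_compact (X := X) e).exists_isMaxOn
    (uoptSimplex_nonempty he) hP'c.continuousOn
  rw [isMaxOn_iff] at hf₀max
  set S : Set (X → ℝ) :=
    uoptSimplex (X := X) e ∩ {h | ∑ x, D' x (h x) = ∑ x, D' x (f₀ x)} with hSdef
  have hScomp : IsCompact S :=
    (uoptSimplex_compact e).inter_right (isClosed_eq hP'c continuous_const)
  have hSne : S.Nonempty := ⟨f₀, hf₀mem, rfl⟩
  obtain ⟨f, hfS, hfmin⟩ := hScomp.exists_isMinOn hSne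
    (continuous_finset_sum _ fun x _ => (continuous_apply x).pow 2).continuousOn
  rw [isMinOn_iff] at hfmin
  refine ⟨f, hfS.1, ?_, ?_⟩
  · intro h hh
    calc ∑ x, D x (h x) = ∑ x, D' x (h x) := (hagree h hh).symm
      _ ≤ ∑ x, D' x (f₀ x) := hf₀max h hh
      _ = ∑ x, D' x (f x) := hfS.2.symm
      _ = ∑ x, D x (f x) := hagree f hfS.1
  · intro h hh hhmax
    have h1 : ∑ x, D' x (h x) = ∑ x, D' x (f₀ x) := by
      have hle : ∑ x, D' x (h x) ≤ ∑ x, D' x (f₀ x) := hf₀max h hh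
      have hge : ∑ x, D x (f₀ x) ≤ ∑ x, D x (h x) := hhmax f₀ hf₀mem
      rw [hagree h hh, hagree f₀ hf₀mem]
      linarith [hagree h hh, hagree f₀ hf₀mem]
    exact hfmin h ⟨hh, h1⟩
open Finset

/-- Key monotonicity: min-norm optimal allocations are pointwise monotone in the budget. -/
lemma uopt_mono {X : Type*} [Fintype X]
    (D : X → ℝ → ℝ) (hconc : ∀ x, ConcaveOn ℝ (Set.Ici 0) (D x))
    {e e' : ℝ} (hee : e ≤ e')
    {f f' : X → ℝ}
    (hf : f ∈ uoptSimplex (X := X) e)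
    (hfmax : ∀ h ∈ uoptSimplex (X := X) e, ∑ x, D x (h x) ≤ ∑ x, D x (f x))
    (hfmin : ∀ h ∈ uoptSimplex (X := X) e,
        (∀ k ∈ uoptSimplex (X := X) e, ∑ x, D x (k x) ≤ ∑ x, D x (h x)) →
        ∑ x, (f x) ^ 2 ≤ ∑ x, (h x) ^ 2)
    (hf' : f' ∈ uoptSimplex (X := X) e')
    (hf'max : ∀ h ∈ uoptSimplex (X := X) e', ∑ x, D x (h x) ≤ ∑ x, D x (f' x))
    (hf'min : ∀ h ∈ uoptSimplex (X := X) e',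
        (∀ k ∈ uoptSimplex (X := X) e', ∑ x, D x (k x) ≤ ∑ x, D x (h x)) →
        ∑ x, (f' x) ^ 2 ≤ ∑ x, (h x) ^ 2) :
    ∀ x, f x ≤ f' x := by
  classical
  obtain ⟨hf0, hfsum⟩ := hf
  obtain ⟨hf'0, hf'sum⟩ := hf'
  set v : X → ℝ := fun x => max (f x - f' x) 0 with hv
  set w : X → ℝ := fun x => max (f' x - f x) 0 with hw
  set c : ℝ := ∑ x, v x with hc
  set W : ℝ := ∑ x, w x with hWdef
  have hv0 : ∀ x, 0 ≤ v x := fun x => le_max_right _ _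
  have hw0 : ∀ x, 0 ≤ w x := fun x => le_max_right _ _
  have hwv : ∀ x, w x - v x = f' x - f x := by
    intro x
    rcases le_total (f x) (f' x) with h | h
    · rw [hv, hw]; simp only
      rw [max_eq_right (by linarith : f x - f' x ≤ 0), max_eq_left (by linarith : 0 ≤ f' x - f x)]
      ring
    · rw [hv, hw]; simp only
      rw [max_eq_left (by linarith : 0 ≤ f x - f' x), max_eq_right (by linarith : f' x - f x ≤ 0)]
      ring
  have hc0 : 0 ≤ c := Finset.sum_nonneg fun x _ => hv0 x
  have hWc : W = c + (e' - e) := by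
    have : ∑ x, (w x - v x) = ∑ x, (f' x - f x) := Finset.sum_congr rfl fun x _ => hwv x
    rw [Finset.sum_sub_distrib, Finset.sum_sub_distrib, hfsum, hf'sum] at this
    rw [hWdef, hc]; linarith
  have hcW : c ≤ W := by rw [hWc]; linarith
  set r : X → ℝ := fun x => if W = 0 then 0 else (c / W) * w x with hr
  have hr0 : ∀ x, 0 ≤ r x := by
    intro x
    rw [hr]; simp only
    split
    · exact le_refl (0:ℝ)
    · exact mul_nonneg (div_nonneg hc0 (le_trans hc0 hcW)) (hw0 x)
  have hrw : ∀ x, r x ≤ w x := by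
    intro x
    rw [hr]; simp only
    split
    · exact hw0 x
    · rename_i hW
      have hWpos : 0 < W := lt_of_le_of_ne (le_trans hc0 hcW) (Ne.symm hW)
      calc (c / W) * w x ≤ 1 * w x := by
            apply mul_le_mul_of_nonneg_right _ (hw0 x)
            exact (div_le_one hWpos).2 hcW
        _ = w x := one_mul _
  have hrsum : ∑ x, r x = c := by
    rw [hr]
    split
    · rename_i hW
      have : c = 0 := le_antisymm (hW ▸ hcW) hc0
      simp [this]
    · rename_i hW
      rw [← Finset.mul_sum, ← hWdef, div_mul_cancel₀ c hW]
  set a : X → ℝ := fun x => min (f x) (f' x) with haDef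
  set b : X → ℝ := fun x => max (f x) (f' x) with hbDef
  have hav : ∀ x, a x = f x - v x := by
    intro x
    rcases le_total (f x) (f' x) with h | h
    · rw [haDef, hv]; simp only
      rw [min_eq_left h, max_eq_right (by linarith : f x - f' x ≤ 0)]; ring
    · rw [haDef, hv]; simp only
      rw [min_eq_right h, max_eq_left (by linarith : 0 ≤ f x - f' x)]; ring
  have hbv : ∀ x, b x = f' x + v x := by
    intro x
    rcases le_total (f x) (f' x) with h | h
    · rw [hbDef, hv]; simp only
      rw [max_eq_right h, max_eq_right (by linarith : f x - f' x ≤ 0)]; ring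
    · rw [hbDef, hv]; simp only
      rw [max_eq_left h, max_eq_left (by linarith : 0 ≤ f x - f' x)]; ring
  have ha0 : ∀ x, 0 ≤ a x := fun x => le_min (hf0 x) (hf'0 x)
  have hab : ∀ x, a x ≤ b x := fun x => min_le_max
  have hwba : ∀ x, w x ≤ b x - a x := by
    intro x
    rcases le_total (f x) (f' x) with h | h
    · rw [hw, haDef, hbDef]; simp only
      rw [max_eq_left (by linarith : 0 ≤ f' x - f x), min_eq_left h, max_eq_right h]
    · rw [hw, haDef, hbDef]; simp only
      rw [max_eq_right (by linarith : f' x - f x ≤ 0), min_eq_right h, max_eq_left h]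
      linarith
  have hrba : ∀ x, r x ≤ b x - a x := fun x => le_trans (hrw x) (hwba x)
  -- the two exchanged allocations
  set g : X → ℝ := fun x => a x + r x with hg
  set k : X → ℝ := fun x => b x - r x with hk
  have hgmem : g ∈ uoptSimplex (X := X) e := by
    constructor
    · intro x; exact add_nonneg (ha0 x) (hr0 x)
    · have hasum : ∑ x, a x = e - c := by
        have : ∑ x, a x = ∑ x, (f x - v x) := Finset.sum_congr rfl fun x _ => hav x
        rw [this, Finset.sum_sub_distrib, hfsum, ← hc]
      rw [hg]
      calc ∑ x, (a x + r x) = (∑ x, a x) + ∑ x, r x := Finset.sum_add_distrib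
        _ = (e - c) + c := by rw [hasum, hrsum]
        _ = e := by ring
  have hkmem : k ∈ uoptSimplex (X := X) e' := by
    constructor
    · intro x
      have : r x ≤ b x := le_trans (hrba x) (by linarith [ha0 x])
      rw [hk]; simp only; linarith
    · have hbsum : ∑ x, b x = e' + c := by
        have : ∑ x, b x = ∑ x, (f' x + v x) := Finset.sum_congr rfl fun x _ => hbv x
        rw [this, Finset.sum_add_distrib, hf'sum, ← hc]
      rw [hk]
      calc ∑ x, (b x - r x) = (∑ x, b x) - ∑ x, r x := Finset.sum_sub_distrib _ _
        _ = (e' + c) - c := by rw [hbsum, hrsum]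
        _ = e' := by ring
  have habD : ∀ x, D x (a x) + D x (b x) = D x (f x) + D x (f' x) := by
    intro x
    rcases le_total (f x) (f' x) with h | h
    · rw [haDef, hbDef]; simp only [min_eq_left h, max_eq_right h]
    · rw [haDef, hbDef]; simp only [min_eq_right h, max_eq_left h]; ring
  have hkey : ∀ x, D x (f x) + D x (f' x) ≤ D x (g x) + D x (k x) := by
    intro x
    rw [← habD x, hg, hk]
    exact uopt_concave_chord (hconc x) (ha0 x) (hab x) (hr0 x) (hrba x)
  have hPsum : (∑ x, D x (f x)) + ∑ x, D x (f' x) ≤ (∑ x, D x (g x)) + ∑ x, D x (k x) := by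
    rw [← Finset.sum_add_distrib, ← Finset.sum_add_distrib]
    exact Finset.sum_le_sum fun x _ => hkey x
  have hPg : ∑ x, D x (g x) ≤ ∑ x, D x (f x) := hfmax g hgmem
  have hPk : ∑ x, D x (k x) ≤ ∑ x, D x (f' x) := hf'max k hkmem
  have hPgeq : ∑ x, D x (g x) = ∑ x, D x (f x) := by linarith
  have hPkeq : ∑ x, D x (k x) = ∑ x, D x (f' x) := by linarith
  have hgmax : ∀ h ∈ uoptSimplex (X := X) e, ∑ x, D x (h x) ≤ ∑ x, D x (g x) := by
    intro h hh; rw [hPgeq]; exact hfmax h hh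
  have hkmax : ∀ h ∈ uoptSimplex (X := X) e', ∑ x, D x (h x) ≤ ∑ x, D x (k x) := by
    intro h hh; rw [hPkeq]; exact hf'max h hh
  -- sum of squares comparison
  have hsqab : ∀ x, (a x) ^ 2 + (b x) ^ 2 = (f x) ^ 2 + (f' x) ^ 2 := by
    intro x
    rcases le_total (f x) (f' x) with h | h
    · rw [haDef, hbDef]; simp only [min_eq_left h, max_eq_right h]
    · rw [haDef, hbDef]; simp only [min_eq_right h, max_eq_left h]; ring
  have hsqkey : ∀ x, (g x) ^ 2 + (k x) ^ 2 ≤ (f x) ^ 2 + (f' x) ^ 2 := by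
    intro x
    rw [← hsqab x]
    have hgx : g x = a x + r x := rfl
    have hkx : k x = b x - r x := rfl
    rw [hgx, hkx]
    nlinarith [hr0 x, hrba x]
  have hsqsum : (∑ x, (g x) ^ 2) + ∑ x, (k x) ^ 2 ≤ (∑ x, (f x) ^ 2) + ∑ x, (f' x) ^ 2 := by
    rw [← Finset.sum_add_distrib, ← Finset.sum_add_distrib]
    exact Finset.sum_le_sum fun x _ => hsqkey x
  have hsqg : ∑ x, (f x) ^ 2 ≤ ∑ x, (g x) ^ 2 := hfmin g hgmem hgmax
  have hsqk : ∑ x, (f' x) ^ 2 ≤ ∑ x, (k x) ^ 2 := hf'min k hkmem hkmax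
  have hsqgeq : ∑ x, (g x) ^ 2 = ∑ x, (f x) ^ 2 := by linarith
  -- midpoint argument: f = g
  set m : X → ℝ := fun x => (f x + g x) / 2 with hm
  have hmmem : m ∈ uoptSimplex (X := X) e := by
    constructor
    · intro x
      show 0 ≤ (f x + g x) / 2
      exact div_nonneg (add_nonneg (hf0 x) (hgmem.1 x)) (by norm_num)
    · rw [hm]
      have : ∑ x, (f x + g x) / 2 = ((∑ x, f x) + ∑ x, g x) / 2 := by
        rw [← Finset.sum_add_distrib, Finset.sum_div]
      rw [this, hfsum, hgmem.2]; ring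
  have hmP : ∀ x, (D x (f x) + D x (g x)) / 2 ≤ D x (m x) := by
    intro x
    have h1 := (hconc x).2 (Set.mem_Ici.2 (hf0 x)) (Set.mem_Ici.2 (hgmem.1 x))
      (by norm_num : (0:ℝ) ≤ 1/2) (by norm_num : (0:ℝ) ≤ 1/2) (by norm_num)
    simp only [smul_eq_mul] at h1
    have : (1/2 : ℝ) * f x + (1/2 : ℝ) * g x = m x := by rw [hm]; ring_nf
    rw [this] at h1
    linarith
  have hmPsum : ∑ x, D x (f x) ≤ ∑ x, D x (m x) := by
    have h2 : ∑ x, (D x (f x) + D x (g x)) ≤ ∑ x, 2 * D x (m x) :=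
      Finset.sum_le_sum fun x _ => by linarith [hmP x]
    rw [Finset.sum_add_distrib, ← Finset.mul_sum] at h2
    linarith [hPgeq]
  have hmmax : ∀ h ∈ uoptSimplex (X := X) e, ∑ x, D x (h x) ≤ ∑ x, D x (m x) := by
    intro h hh; exact le_trans (hfmax h hh) hmPsum
  have hsqm : ∑ x, (f x) ^ 2 ≤ ∑ x, (m x) ^ 2 := hfmin m hmmem hmmax
  have hdiff : ∑ x, (f x - g x) ^ 2 ≤ 0 := by
    have hid : ∀ x, (f x - g x) ^ 2 = 2 * (f x) ^ 2 + 2 * (g x) ^ 2 - 4 * (m x) ^ 2 := by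
      intro x; rw [hm]; ring
    have : ∑ x, (f x - g x) ^ 2
        = 2 * (∑ x, (f x) ^ 2) + 2 * (∑ x, (g x) ^ 2) - 4 * ∑ x, (m x) ^ 2 := by
      rw [Finset.sum_congr rfl fun x _ => hid x]
      rw [Finset.sum_sub_distrib, Finset.sum_add_distrib, ← Finset.mul_sum, ← Finset.mul_sum,
        ← Finset.mul_sum]
    rw [this, hsqgeq]
    linarith
  have hfg : ∀ x, f x = g x := by
    intro x
    have hz : ∑ x, (f x - g x) ^ 2 = 0 :=
      le_antisymm hdiff (Finset.sum_nonneg fun x _ => sq_nonneg _)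
    have := (Finset.sum_eq_zero_iff_of_nonneg (fun x _ => sq_nonneg (f x - g x))).1 hz x
      (Finset.mem_univ x)
    have := pow_eq_zero_iff (n := 2) (by norm_num) |>.1 this
    linarith [sub_eq_zero.1 this]
  -- conclude
  intro x
  by_contra hcon
  push_neg at hcon
  have hwx : w x = 0 := by rw [hw]; simp only; rw [max_eq_right]; linarith
  have hrx : r x = 0 := by
    rw [hr]; simp only; split
    · rfl
    · rw [hwx]; ring
  have hax : a x = f' x := by rw [haDef]; simp only; rw [min_eq_right hcon.le]
  have := hfg x
  rw [hg] at this
  simp only at this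
  rw [hax, hrx] at this
  linarith

/-- Existence of a uniformly optimal search plan in the discrete case
(Theorem 1(i) of the paper): if `X` is a nonempty finite set, `π` a target density on `X`,
`d` a detection function with `d x 0 = 0` and `d x ·` continuous, concave, nondecreasing
on `[0, ∞)`, and `E` a cumulative effort function, then there is a search plan `φ*` in
`Φ(E)` maximizing the subjective detection probability at every time. -/
theorem uniformly_optimal_exists_discrete
    {X : Type*} [Fintype X] [Nonempty X]
    (π : X → ℝ) (hπpos : ∀ x, 0 < π x) (hπsum : ∑ x, π x = 1)
    (d : X → ℝ → ℝ)
    (hdrange : ∀ x, ∀ y ∈ Set.Ici (0:ℝ), d x y ∈ Set.Icc (0:ℝ) 1)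
    (hd0 : ∀ x, d x 0 = 0)
    (hdcont : ∀ x, ContinuousOn (d x) (Set.Ici 0))
    (hdconc : ∀ x, ConcaveOn ℝ (Set.Ici 0) (d x))
    (hdmono : ∀ x, MonotoneOn (d x) (Set.Ici 0))
    (E : ℝ → ℝ) (hE0 : ∀ t, 0 ≤ t → 0 ≤ E t)
    (hEmono : MonotoneOn E (Set.Ici 0))
    (hEpos : ∀ t, 0 < t → 0 < E t) :
    ∃ φstar : X → ℝ → ℝ,
      (∀ x t, 0 ≤ t → 0 ≤ φstar x t) ∧
      (∀ x, MonotoneOn (φstar x) (Set.Ici 0)) ∧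
      (∀ t, 0 ≤ t → ∑ x, φstar x t = E t) ∧
      ∀ φ : X → ℝ → ℝ,
        (∀ x t, 0 ≤ t → 0 ≤ φ x t) →
        (∀ x, MonotoneOn (φ x) (Set.Ici 0)) →
        (∀ t, 0 ≤ t → ∑ x, φ x t = E t) →
        ∀ t, 0 ≤ t →
          ∑ x, d x (φ x t) * π x ≤ ∑ x, d x (φstar x t) * π x := by
  classical
  set D : X → ℝ → ℝ := fun x y => d x y * π x with hD
  have hDcont : ∀ x, ContinuousOn (D x) (Set.Ici 0) := fun x =>
    (hdcont x).mul continuousOn_const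
  have hDconc : ∀ x, ConcaveOn ℝ (Set.Ici 0) (D x) := by
    intro x
    refine ⟨convex_Ici 0, ?_⟩
    intro y hy z hz s u hs hu hsu
    have h1 := (hdconc x).2 hy hz hs hu hsu
    simp only [smul_eq_mul] at h1 ⊢
    have h2 := mul_le_mul_of_nonneg_right h1 (le_of_lt (hπpos x))
    show s * (d x y * π x) + u * (d x z * π x) ≤ d x (s * y + u * z) * π x
    nlinarith [h2]
  -- the optimal allocation for each budget
  have hex : ∀ e : ℝ, 0 ≤ e → ∃ f,
      f ∈ uoptSimplex (X := X) e ∧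
      (∀ h ∈ uoptSimplex (X := X) e, ∑ x, D x (h x) ≤ ∑ x, D x (f x)) ∧
      ∀ h ∈ uoptSimplex (X := X) e,
        (∀ k ∈ uoptSimplex (X := X) e, ∑ x, D x (k x) ≤ ∑ x, D x (h x)) →
        ∑ x, (f x) ^ 2 ≤ ∑ x, (h x) ^ 2 := by
    intro e he
    obtain ⟨f, h1, h2, h3⟩ := uopt_exists D hDcont he
    exact ⟨f, h1, h2, h3⟩
  choose g hgmem hgmax hgmin using hex
  refine ⟨fun x t => if ht : 0 ≤ t then g (E t) (hE0 t ht) x else 0, ?_, ?_, ?_, ?_⟩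
  · intro x t ht
    simp only [dif_pos ht]
    exact (hgmem (E t) (hE0 t ht)).1 x
  · intro x t₁ ht₁ t₂ ht₂ h12
    simp only [dif_pos (Set.mem_Ici.1 ht₁), dif_pos (Set.mem_Ici.1 ht₂)]
    have hE12 : E t₁ ≤ E t₂ := hEmono ht₁ ht₂ h12
    exact uopt_mono D hDconc hE12
      (hgmem (E t₁) (hE0 t₁ ht₁)) (hgmax (E t₁) (hE0 t₁ ht₁)) (hgmin (E t₁) (hE0 t₁ ht₁))
      (hgmem (E t₂) (hE0 t₂ ht₂)) (hgmax (E t₂) (hE0 t₂ ht₂)) (hgmin (E t₂) (hE0 t₂ ht₂)) x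
  · intro t ht
    simp only [dif_pos ht]
    exact (hgmem (E t) (hE0 t ht)).2
  · intro φ hφ0 hφmono hφsum t ht
    simp only [dif_pos ht]
    have hmem : (fun x => φ x t) ∈ uoptSimplex (X := X) (E t) :=
      ⟨fun x => hφ0 x t ht, hφsum t ht⟩
    exact hgmax (E t) (hE0 t ht) _ hmem
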